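/- Let (Ω, 𝔉, μ) be a probability space and C ≥ 0 a real constant. Let f and (f_k)_{k∈ℕ} be real-valued measurable functions on Ω such that f_k → f in L²(μ) and f_k → f μ-almost everywhere, and let (E_k)_{k∈ℕ} be real numbers converging to E ∈ ℝ. Suppose that for every k the function f_k² log f_k² is μ-integrable and Ent_μ(f_k²) ≤ C·E_k. Then ∫ f² log f² dμ (which is well defined with values in (−∞, +∞] because u log u ≥ −1/e) is finite and Ent_μ(f²) ≤ C·E. -/

import Mathlib

open MeasureTheory Filter

/-- The entropy `Ent_μ(g) = ∫ g log g dμ − (∫ g dμ)·log(∫ g dμ)` (with the convention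
`0 · log 0 = 0`, which holds automatically since `Real.log 0 = 0`). -/
noncomputable def ent {Ω : Type*} [MeasurableSpace Ω] (μ : Measure Ω) (g : Ω → ℝ) : ℝ :=
  (∫ x, g x * Real.log (g x) ∂μ) - (∫ x, g x ∂μ) * Real.log (∫ x, g x ∂μ)

lemma aux_lb (x : ℝ) (hx : 0 ≤ x) : -Real.exp (-1) ≤ x * Real.log x := by
  rcases eq_or_lt_of_le hx with h | h
  · rw [← h]; simp; positivity
  · have h1 : -Real.log x ≤ Real.exp (-1 - Real.log x) := by
      linarith [Real.add_one_le_exp (-1 - Real.log x)]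
    have h2 : Real.exp (-1 - Real.log x) * x = Real.exp (-1) := by
      rw [Real.exp_sub, Real.exp_log h]; field_simp
    nlinarith [mul_le_mul_of_nonneg_right h1 h.le]

lemma tendsto_integral_sq {Ω : Type*} [MeasurableSpace Ω] (μ : Measure Ω)
    (f : Ω → ℝ) (fk : ℕ → Ω → ℝ)
    (hfL2 : MemLp f 2 μ) (hfkL2 : ∀ k, MemLp (fk k) 2 μ)
    (hL2 : Tendsto (fun k => eLpNorm (fk k - f) 2 μ) atTop (nhds 0)) :
    Tendsto (fun k => ∫ x, fk k x ^ 2 ∂μ) atTop (nhds (∫ x, f x ^ 2 ∂μ)) := by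
  set F : Lp ℝ 2 μ := hfL2.toLp f with hF
  set Fk : ℕ → Lp ℝ 2 μ := fun k => (hfkL2 k).toLp (fk k) with hFk
  have hten : Tendsto Fk atTop (nhds F) := by
    rw [tendsto_iff_norm_sub_tendsto_zero]
    have hnorm : ∀ k, ‖Fk k - F‖ = (eLpNorm (fk k - f) 2 μ).toReal := fun k => by
      rw [hFk, hF, ← MemLp.toLp_sub]
      exact Lp.norm_toLp _ _
    simp_rw [hnorm]
    exact (ENNReal.tendsto_toReal (by simp)).comp hL2
  have hinner : Tendsto (fun k => (inner ℝ (Fk k) (Fk k) : ℝ)) atTop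
      (nhds (inner ℝ F F : ℝ)) := hten.inner hten
  have h1 : ∀ k, (inner ℝ (Fk k) (Fk k) : ℝ) = ∫ x, fk k x ^ 2 ∂μ := fun k => by
    rw [L2.inner_def]
    refine integral_congr_ae ?_
    filter_upwards [(hfkL2 k).coeFn_toLp] with x hx
    simp [hFk, hx, RCLike.inner_apply, sq]
  have h2 : (inner ℝ F F : ℝ) = ∫ x, f x ^ 2 ∂μ := by
    rw [L2.inner_def]
    refine integral_congr_ae ?_
    filter_upwards [hfL2.coeFn_toLp] with x hx
    simp [hF, hx, RCLike.inner_apply, sq]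
  simpa only [h1, h2] using hinner

/-- Let `(Ω, 𝔉, μ)` be a probability space and `C ≥ 0`.  Let `f` and `(f_k)` be measurable
real functions with `f_k → f` in `L²(μ)` and `μ`-a.e., and let `E_k → E` in `ℝ`.  If for
every `k` the function `f_k² log f_k²` is integrable and `Ent_μ(f_k²) ≤ C·E_k`, then
`∫ f² log f² dμ` is finite (i.e. `f² log f²` is integrable) and `Ent_μ(f²) ≤ C·E`. -/
theorem stmt3 {Ω : Type*} [MeasurableSpace Ω] (μ : Measure Ω) [IsProbabilityMeasure μ]
    (C : ℝ) (hC : 0 ≤ C)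
    (f : Ω → ℝ) (fk : ℕ → Ω → ℝ)
    (hf : Measurable f) (hfk : ∀ k, Measurable (fk k))
    (hfL2 : MemLp f 2 μ) (hfkL2 : ∀ k, MemLp (fk k) 2 μ)
    (hL2 : Tendsto (fun k => eLpNorm (fk k - f) 2 μ) atTop (nhds 0))
    (hae : ∀ᵐ x ∂μ, Tendsto (fun k => fk k x) atTop (nhds (f x)))
    (Ek : ℕ → ℝ) (E : ℝ) (hE : Tendsto Ek atTop (nhds E))
    (hint : ∀ k, Integrable (fun x => (fk k x) ^ 2 * Real.log ((fk k x) ^ 2)) μ)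
    (hent : ∀ k, ent μ (fun x => (fk k x) ^ 2) ≤ C * Ek k) :
    Integrable (fun x => (f x) ^ 2 * Real.log ((f x) ^ 2)) μ ∧
      ent μ (fun x => (f x) ^ 2) ≤ C * E := by
  have hIk : Tendsto (fun k => ∫ x, fk k x ^ 2 ∂μ) atTop (nhds (∫ x, f x ^ 2 ∂μ)) :=
    tendsto_integral_sq μ f fk hfL2 hfkL2 hL2
  set I : ℝ := ∫ x, f x ^ 2 ∂μ with hIdef
  set Ik : ℕ → ℝ := fun k => ∫ x, fk k x ^ 2 ∂μ with hIkdef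
  set hk : ℕ → ℝ := fun k => ∫ x, fk k x ^ 2 * Real.log (fk k x ^ 2) ∂μ with hhkdef
  -- entropy bound rearranged
  have hbk : ∀ k, hk k ≤ C * Ek k + Ik k * Real.log (Ik k) := fun k => by
    have h := hent k
    simp only [ent] at h
    simp only [hhkdef, hIkdef]
    linarith
  -- continuity of u ↦ u² log u²
  have hcont : Continuous (fun u : ℝ => u ^ 2 * Real.log (u ^ 2)) :=
    Real.continuous_mul_log.comp (continuous_pow 2)
  set G : Ω → ℝ := fun x => f x ^ 2 * Real.log (f x ^ 2) + Real.exp (-1) with hGdef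
  set Gk : ℕ → Ω → ℝ := fun k x => fk k x ^ 2 * Real.log (fk k x ^ 2) + Real.exp (-1)
    with hGkdef
  have hnn : ∀ u : ℝ, 0 ≤ u ^ 2 * Real.log (u ^ 2) + Real.exp (-1) := fun u => by
    linarith [aux_lb (u ^ 2) (sq_nonneg u)]
  have haeg : ∀ᵐ x ∂μ, Tendsto (fun k => Gk k x) atTop (nhds (G x)) := by
    filter_upwards [hae] with x hx
    exact Tendsto.add_const _ ((hcont.tendsto (f x)).comp hx)
  have hmeasg : Measurable G := ((hcont.measurable).comp hf).add_const _
  have hmeasgk : ∀ k, Measurable (Gk k) := fun k =>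
    ((hcont.measurable).comp (hfk k)).add_const _
  -- Fatou
  have hfatou : ∫⁻ x, ENNReal.ofReal (G x) ∂μ ≤
      liminf (fun k => ∫⁻ x, ENNReal.ofReal (Gk k x) ∂μ) atTop := by
    have := lintegral_liminf_le (μ := μ) (u := atTop)
      (f := fun k x => ENNReal.ofReal (Gk k x))
      (fun k => ENNReal.measurable_ofReal.comp (hmeasgk k))
    refine le_trans (le_of_eq ?_) this
    refine lintegral_congr_ae ?_
    filter_upwards [haeg] with x hx
    exact (((ENNReal.continuous_ofReal.tendsto _).comp hx).liminf_eq).symm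
  have hGkint : ∀ k, Integrable (Gk k) μ := fun k => (hint k).add (integrable_const _)
  have hlk : ∀ k, ∫⁻ x, ENNReal.ofReal (Gk k x) ∂μ = ENNReal.ofReal (∫ x, Gk k x ∂μ) :=
    fun k =>
      (ofReal_integral_eq_lintegral_ofReal (hGkint k) (ae_of_all _ fun x => hnn _)).symm
  have hintGk : ∀ k, ∫ x, Gk k x ∂μ = hk k + Real.exp (-1) := fun k => by
    simp only [hGkdef, hhkdef]
    rw [integral_add (hint k) (integrable_const _), integral_const]
    simp
  set B : ℝ := C * E + I * Real.log I + Real.exp (-1) with hBdef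
  have hbtend : Tendsto (fun k => C * Ek k + Ik k * Real.log (Ik k) + Real.exp (-1))
      atTop (nhds B) := by
    exact Tendsto.add_const _ ((hE.const_mul C).add
      ((Real.continuous_mul_log.tendsto I).comp hIk))
  have hliminf : liminf (fun k => ∫⁻ x, ENNReal.ofReal (Gk k x) ∂μ) atTop ≤
      ENNReal.ofReal B := by
    have hck : Tendsto
        (fun k => ENNReal.ofReal (C * Ek k + Ik k * Real.log (Ik k) + Real.exp (-1)))
        atTop (nhds (ENNReal.ofReal B)) :=
      (ENNReal.continuous_ofReal.tendsto _).comp hbtend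
    rw [← hck.liminf_eq]
    refine liminf_le_liminf (Eventually.of_forall fun k => ?_)
    rw [hlk k, hintGk k]
    exact ENNReal.ofReal_le_ofReal (by linarith [hbk k])
  have hfin : ∫⁻ x, ENNReal.ofReal (G x) ∂μ ≤ ENNReal.ofReal B := hfatou.trans hliminf
  have hGint : Integrable G μ := by
    refine ⟨hmeasg.aestronglyMeasurable, ?_⟩
    rw [hasFiniteIntegral_iff_ofReal (ae_of_all _ fun x => hnn (f x))]
    exact lt_of_le_of_lt hfin ENNReal.ofReal_lt_top
  have hmain : Integrable (fun x => f x ^ 2 * Real.log (f x ^ 2)) μ := by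
    have h := hGint.sub (integrable_const (Real.exp (-1)))
    refine h.congr (ae_of_all _ fun x => ?_)
    simp [hGdef]
  refine ⟨hmain, ?_⟩
  have hB : 0 ≤ B := by
    refine ge_of_tendsto hbtend (Eventually.of_forall fun k => ?_)
    have h0 : 0 ≤ ∫ x, Gk k x ∂μ := integral_nonneg fun x => hnn _
    rw [hintGk k] at h0
    linarith [hbk k]
  have hle : ∫ x, G x ∂μ ≤ B := by
    have h1 : ENNReal.ofReal (∫ x, G x ∂μ) = ∫⁻ x, ENNReal.ofReal (G x) ∂μ :=
      ofReal_integral_eq_lintegral_ofReal hGint (ae_of_all _ fun x => hnn _)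
    exact (ENNReal.ofReal_le_ofReal_iff hB).mp (h1 ▸ hfin)
  have hGeq : ∫ x, G x ∂μ = (∫ x, f x ^ 2 * Real.log (f x ^ 2) ∂μ) + Real.exp (-1) := by
    simp only [hGdef]
    rw [integral_add hmain (integrable_const _), integral_const]
    simp
  simp only [ent]
  rw [hGeq] at hle
  have : (∫ x, f x ^ 2 * Real.log (f x ^ 2) ∂μ) - I * Real.log I ≤ C * E := by
    simp only [hBdef] at hle; linarith
  simpa [hIdef] using this
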